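/- Let r_R > 0, λ > 0, θ₀ ∈ ℝ, and t₁ < t₂ with (t₂ − t₁)/r_R < 2π. Let β : ℝ → ℝ be continuously differentiable with β(t₁) = β(t₂) = 0, β(t) > 0 for all t ∈ (t₁, t₂), β'(t) = λ·sin(θ₀ − (t − t₁)/r_R) for all t ∈ [t₁, t₂], and (β(t)/r_R)² + (β'(t))² = λ² for all t ∈ (t₁, t₂). Then (t₂ − t₁)/r_R = π. -/

import Mathlib

open Real Set Filter Topology

/-- For the abnormal multiplier `e = 0`, the middle right-turn arc of an `LRL`
path in the weighted Markov-Dubins problem has angle exactly `π`. -/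
theorem middle_arc_angle_eq_pi
    (rR lam θ₀ t₁ t₂ : ℝ) (β : ℝ → ℝ)
    (hrR : 0 < rR) (hlam : 0 < lam)
    (ht : t₁ < t₂) (hlt : (t₂ - t₁) / rR < 2 * π)
    (hβC1 : ContDiff ℝ 1 β)
    (hβ₁ : β t₁ = 0) (hβ₂ : β t₂ = 0)
    (hβpos : ∀ t ∈ Set.Ioo t₁ t₂, 0 < β t)
    (hderiv : ∀ t ∈ Set.Icc t₁ t₂, deriv β t = lam * Real.sin (θ₀ - (t - t₁) / rR))
    (hellipse : ∀ t ∈ Set.Ioo t₁ t₂, (β t / rR) ^ 2 + (deriv β t) ^ 2 = lam ^ 2) :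
    (t₂ - t₁) / rR = π := by
  have hβcont : Continuous β := hβC1.continuous
  set Δ := (t₂ - t₁) / rR with hΔ
  have hΔpos : 0 < Δ := div_pos (by linarith) hrR
  -- continuous combination g
  set g : ℝ → ℝ := fun t => (β t / rR) ^ 2 + (lam * Real.sin (θ₀ - (t - t₁) / rR)) ^ 2 with hg
  have hgcont : Continuous g := by
    apply Continuous.add
    · exact ((hβcont.div_const rR).pow 2)
    · exact ((continuous_const.mul ((Real.continuous_sin.comp
        (continuous_const.sub ((continuous_id.sub continuous_const).div_const rR))))).pow 2)
  have hgIoo : ∀ t ∈ Set.Ioo t₁ t₂, g t = lam ^ 2 := by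
    intro t htm
    have h1 := hellipse t htm
    have h2 := hderiv t (Set.mem_Icc_of_Ioo htm)
    simp only [hg]
    rw [← h2]; exact h1
  have hneL : (𝓝[Set.Ioo t₁ t₂] t₁).NeBot := left_nhdsWithin_Ioo_neBot ht
  have hneR : (𝓝[Set.Ioo t₁ t₂] t₂).NeBot := right_nhdsWithin_Ioo_neBot ht
  have hgt : ∀ s ∈ ({t₁, t₂} : Set ℝ), (𝓝[Set.Ioo t₁ t₂] s).NeBot → g s = lam ^ 2 := by
    intro s _ hne
    have h1 : Tendsto g (𝓝[Set.Ioo t₁ t₂] s) (𝓝 (g s)) :=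
      (hgcont.tendsto s).mono_left nhdsWithin_le_nhds
    have h2 : Tendsto g (𝓝[Set.Ioo t₁ t₂] s) (𝓝 (lam ^ 2)) := by
      refine Tendsto.congr' ?_ tendsto_const_nhds
      filter_upwards [self_mem_nhdsWithin] with t htm
      exact (hgIoo t htm).symm
    exact tendsto_nhds_unique h1 h2
  have hg1 : g t₁ = lam ^ 2 := hgt t₁ (by simp) hneL
  have hg2 : g t₂ = lam ^ 2 := hgt t₂ (by simp) hneR
  have hsin1sq : Real.sin θ₀ ^ 2 = 1 := by
    have : (0 / rR) ^ 2 + (lam * Real.sin (θ₀ - (t₁ - t₁) / rR)) ^ 2 = lam ^ 2 := by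
      rw [← hβ₁]; simpa [hg] using hg1
    simp at this
    rw [mul_pow] at this
    have hl2 : lam ^ 2 ≠ 0 := by positivity
    exact mul_left_cancel₀ hl2 (by rw [mul_one]; exact this)
  have hsin2sq : Real.sin (θ₀ - Δ) ^ 2 = 1 := by
    have : (0 / rR) ^ 2 + (lam * Real.sin (θ₀ - (t₂ - t₁) / rR)) ^ 2 = lam ^ 2 := by
      rw [← hβ₂]; simpa [hg] using hg2
    simp at this
    rw [mul_pow] at this
    have hl2 : lam ^ 2 ≠ 0 := by positivity
    exact mul_left_cancel₀ hl2 (by rw [mul_one]; exact this)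
  -- derivative sign at endpoints via slopes
  have hdiff : Differentiable ℝ β := hβC1.differentiable one_ne_zero
  have hd1nn : 0 ≤ deriv β t₁ := by
    have hslope : Tendsto (slope β t₁) (𝓝[≠] t₁) (𝓝 (deriv β t₁)) :=
      hasDerivAt_iff_tendsto_slope.mp (hdiff t₁).hasDerivAt
    have hle : 𝓝[Set.Ioo t₁ t₂] t₁ ≤ 𝓝[≠] t₁ :=
      nhdsWithin_mono _ (fun x hx => ne_of_gt hx.1)
    refine ge_of_tendsto (hslope.mono_left hle) ?_
    filter_upwards [self_mem_nhdsWithin] with t htm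
    have : 0 < (β t - β t₁) / (t - t₁) :=
      div_pos (by rw [hβ₁]; simpa using hβpos t htm) (by linarith [htm.1])
    simpa [slope_def_field, div_eq_inv_mul] using this.le
  have hd2np : deriv β t₂ ≤ 0 := by
    have hslope : Tendsto (slope β t₂) (𝓝[≠] t₂) (𝓝 (deriv β t₂)) :=
      hasDerivAt_iff_tendsto_slope.mp (hdiff t₂).hasDerivAt
    have hle : 𝓝[Set.Ioo t₁ t₂] t₂ ≤ 𝓝[≠] t₂ :=
      nhdsWithin_mono _ (fun x hx => ne_of_lt hx.2)
    refine le_of_tendsto (hslope.mono_left hle) ?_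
    filter_upwards [self_mem_nhdsWithin] with t htm
    have : (β t - β t₂) / (t - t₂) < 0 :=
      div_neg_of_pos_of_neg (by rw [hβ₂]; simpa using hβpos t htm) (by linarith [htm.2])
    simpa [slope_def_field, div_eq_inv_mul] using this.le
  have hs1 : Real.sin θ₀ = 1 := by
    have h := hderiv t₁ ⟨le_rfl, ht.le⟩
    simp at h
    have : 0 ≤ Real.sin θ₀ := nonneg_of_mul_nonneg_right (by rw [← h]; exact hd1nn) hlam
    nlinarith
  have hs2 : Real.sin (θ₀ - Δ) = -1 := by
    have h := hderiv t₂ ⟨ht.le, le_rfl⟩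
    have hle : lam * Real.sin (θ₀ - Δ) ≤ 0 := by rw [← h]; exact hd2np
    have : Real.sin (θ₀ - Δ) ≤ 0 := nonpos_of_mul_nonpos_right hle hlam
    nlinarith
  -- extract angle equalities
  obtain ⟨k, hk⟩ := Real.sin_eq_one_iff.mp hs1
  have hs2' : Real.sin (Δ - θ₀) = 1 := by rw [← neg_sub θ₀ Δ, Real.sin_neg, hs2]; ring
  obtain ⟨m, hm⟩ := Real.sin_eq_one_iff.mp hs2'
  have hΔeq : Δ = π + (k + m) * (2 * π) := by linarith
  have hπ := Real.pi_pos
  have hkm : k + m = 0 := by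
    by_contra hne
    rcases lt_or_gt_of_ne hne with h | h
    · have h1 : (k : ℝ) + (m : ℝ) ≤ -1 := by
        have : k + m ≤ -1 := by omega
        exact_mod_cast this
      nlinarith
    · have h1 : (1 : ℝ) ≤ (k : ℝ) + (m : ℝ) := by
        have : 1 ≤ k + m := by omega
        exact_mod_cast this
      nlinarith
  have hkm' : (k : ℝ) + (m : ℝ) = 0 := by exact_mod_cast hkm
  rw [hΔeq, hkm']; ring
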